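/- Let B and C be n×n real symmetric positive definite matrices and let b, c ∈ ℝⁿ with (b − c)ᵀ C (b − c) > 1 (i.e., b lies strictly outside the solid ellipsoid E₂ = {x : (x − c)ᵀ C (x − c) ≤ 1}). Set C̃ = B^{1/2} C^{-1} B^{1/2}, let c̃ be the unique solution of (B^{-1/2} (B^{-1/2} C B^{-1/2})^{1/2}) c̃ = c − b, and let M₁ be the 2n×2n block matrix with blocks [C̃, −I_n; −c̃c̃ᵀ, C̃]. Then the spectrum of M₁ (as a matrix over ℂ) contains an eigenvalue whose real part is strictly negative; in particular the minimum of the real parts of the eigenvalues of M₁ is strictly negative. -/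

import Mathlib

open Matrix

open scoped ComplexOrder in
/-- The positive semidefinite square root of a positive semidefinite matrix
(the definition `Matrix.PosSemidef.sqrt` of the older Mathlib, since removed). -/
noncomputable def Matrix.PosSemidef.sqrt {n 𝕜 : Type*} [Fintype n] [DecidableEq n] [RCLike 𝕜]
    {A : Matrix n n 𝕜} (hA : A.PosSemidef) : Matrix n n 𝕜 :=
  hA.1.eigenvectorUnitary.1 * diagonal ((↑) ∘ (√·) ∘ hA.1.eigenvalues) *
    (star hA.1.eigenvectorUnitary : Matrix n n 𝕜)

open Polynomial Filter

lemma my_sqrt_isHermitian {m : Type*} [Fintype m] [DecidableEq m] {A : Matrix m m ℝ}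
    (hA : A.PosSemidef) : (Matrix.PosSemidef.sqrt hA).IsHermitian := by
  unfold Matrix.PosSemidef.sqrt
  rw [IsHermitian]
  simp only [conjTranspose_mul, star_eq_conjTranspose, conjTranspose_conjTranspose,
    diagonal_conjTranspose, Matrix.mul_assoc, star_trivial]

lemma my_sqrt_mul_self {m : Type*} [Fintype m] [DecidableEq m] {A : Matrix m m ℝ}
    (hA : A.PosSemidef) : Matrix.PosSemidef.sqrt hA * Matrix.PosSemidef.sqrt hA = A := by
  unfold Matrix.PosSemidef.sqrt
  have hU : (star hA.1.eigenvectorUnitary : Matrix m m ℝ) * hA.1.eigenvectorUnitary.1 = 1 :=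
    Unitary.star_mul_self_of_mem hA.1.eigenvectorUnitary.2
  have hD : diagonal ((RCLike.ofReal ∘ (√·) ∘ hA.1.eigenvalues : m → ℝ)) *
      diagonal (RCLike.ofReal ∘ (√·) ∘ hA.1.eigenvalues) = diagonal (RCLike.ofReal ∘ hA.1.eigenvalues) := by
    rw [diagonal_mul_diagonal]
    congr 1; funext i
    simp [Real.mul_self_sqrt (hA.eigenvalues_nonneg i)]
  calc _ = hA.1.eigenvectorUnitary.1 * (diagonal ((RCLike.ofReal ∘ (√·) ∘ hA.1.eigenvalues : m → ℝ)) *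
      ((star hA.1.eigenvectorUnitary : Matrix m m ℝ) * hA.1.eigenvectorUnitary.1) *
      diagonal (RCLike.ofReal ∘ (√·) ∘ hA.1.eigenvalues)) * (star hA.1.eigenvectorUnitary : Matrix m m ℝ) := by
        simp only [Matrix.mul_assoc]
    _ = A := by
      rw [hU, Matrix.mul_one, hD]
      conv_rhs => rw [hA.1.spectral_theorem]
      simp [Matrix.mul_assoc]


lemma my_eval_charpoly {m : Type*} [Fintype m] [DecidableEq m] (M : Matrix m m ℝ) (t : ℝ) :
    M.charpoly.eval t = ((Matrix.scalar m t) - M).det := by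
  rw [Matrix.charpoly, eval_det, matPolyEquiv_charmatrix, eval_sub, eval_X, eval_C]

lemma my_dot_sq {m : Type*} [Fintype m] (A : Matrix m m ℝ) (x : m → ℝ) :
    x ⬝ᵥ ((Aᵀ * A) *ᵥ x) = (A *ᵥ x) ⬝ᵥ (A *ᵥ x) := by
  rw [← mulVec_mulVec, dotProduct_mulVec, vecMul_transpose]


/-- Let `B, C` be SPD, `b, c : ℝⁿ` with `(b - c)ᵀ C (b - c) > 1` (so `b` lies strictly outside
the solid ellipsoid `E₂`). With `C̃ = B^{1/2} C⁻¹ B^{1/2}`, `c̃` the unique solution of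
`(B^{-1/2} (B^{-1/2} C B^{-1/2})^{1/2}) c̃ = c - b`, and `M₁ = [C̃, -I; -c̃c̃ᵀ, C̃]`, the
spectrum of `M₁` over `ℂ` contains an eigenvalue with strictly negative real part. -/
theorem stmt_8 {n : ℕ} {B C : Matrix (Fin n) (Fin n) ℝ}
    (hB : B.PosDef) (hC : C.PosDef) {b c : Fin n → ℝ}
    (houtside : (b - c) ⬝ᵥ (C *ᵥ (b - c)) > 1)
    (Q : Matrix (Fin n) (Fin n) ℝ) (hQspd : Q.PosDef)
    (hQsq : Q ^ 2 = (Matrix.PosSemidef.sqrt hB.posSemidef)⁻¹ * C * (Matrix.PosSemidef.sqrt hB.posSemidef)⁻¹)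
    (Ct : Matrix (Fin n) (Fin n) ℝ)
    (hCt : Ct = Matrix.PosSemidef.sqrt hB.posSemidef * C⁻¹ * Matrix.PosSemidef.sqrt hB.posSemidef)
    (ct : Fin n → ℝ)
    (hct : ((Matrix.PosSemidef.sqrt hB.posSemidef)⁻¹ * Q) *ᵥ ct = c - b)
    (M₁ : Matrix (Fin n ⊕ Fin n) (Fin n ⊕ Fin n) ℝ)
    (hM₁ : M₁ = Matrix.fromBlocks Ct (-1) (-(Matrix.vecMulVec ct ct)) Ct) :
    ∃ z ∈ spectrum ℂ (M₁.map Complex.ofReal), z.re < 0 := by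
  set S : Matrix (Fin n) (Fin n) ℝ := Matrix.PosSemidef.sqrt hB.posSemidef with hS
  -- basic facts about S
  have hSsym : Sᵀ = S := by
    have h := my_sqrt_isHermitian hB.posSemidef
    ext i j
    have := congrFun (congrFun h i) j
    simpa [conjTranspose_apply] using this
  have hSS : S * S = B := my_sqrt_mul_self hB.posSemidef
  have hSdet : S.det ≠ 0 := by
    intro h
    have : B.det = 0 := by rw [← hSS, det_mul, h, mul_zero]
    exact hB.det_pos.ne' this
  have hSu : IsUnit S.det := hSdet.isUnit
  have hSinv : S * S⁻¹ = 1 := mul_nonsing_inv _ hSu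
  have hS'inv : S⁻¹ * S = 1 := nonsing_inv_mul _ hSu
  have hCu : IsUnit C.det := hC.det_pos.ne'.isUnit
  have hQsym : Qᵀ = Q := by
    have h := hQspd.isHermitian
    ext i j
    have := congrFun (congrFun h i) j
    simpa [conjTranspose_apply] using this
  have hQQ : Q * Q = S⁻¹ * C * S⁻¹ := by rw [← pow_two]; exact hQsq
  -- Ct inverse
  have hCtQ : Ct * (Q * Q) = 1 := by
    rw [hCt, hQQ]
    calc S * C⁻¹ * S * (S⁻¹ * C * S⁻¹)
        = S * C⁻¹ * (S * S⁻¹) * C * S⁻¹ := by noncomm_ring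
      _ = S * (C⁻¹ * C) * S⁻¹ := by rw [hSinv]; noncomm_ring
      _ = S * S⁻¹ := by rw [nonsing_inv_mul _ hCu, mul_one]
      _ = 1 := hSinv
  have hCtinv : Ct⁻¹ = Q * Q := inv_eq_right_inv hCtQ
  have hCtdet : 0 < Ct.det := by
    have h1 : Ct.det * (Q * Q).det = 1 := by rw [← det_mul, hCtQ, det_one]
    have h2 : 0 < (Q * Q).det := by
      rw [det_mul]; exact mul_pos hQspd.det_pos hQspd.det_pos
    nlinarith
  have hCtu : IsUnit Ct.det := hCtdet.ne'.isUnit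
  -- Q *ᵥ ct = S *ᵥ (c - b)
  have hQct : Q *ᵥ ct = S *ᵥ (c - b) := by
    have := congrArg (fun v => S *ᵥ v) hct
    simpa [mulVec_mulVec, ← Matrix.mul_assoc, hSinv] using this
  -- key scalar identity
  have hkey : ct ⬝ᵥ ((Ct⁻¹ * Ct⁻¹) *ᵥ ct) = (b - c) ⬝ᵥ (C *ᵥ (b - c)) := by
    have hQS : (Q * S)ᵀ * (Q * S) = C := by
      rw [transpose_mul, hQsym, hSsym]
      calc S * Q * (Q * S) = S * (Q * Q) * S := by noncomm_ring
        _ = (S * S⁻¹) * C * (S⁻¹ * S) := by rw [hQQ]; noncomm_ring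
        _ = C := by rw [hSinv, hS'inv, one_mul, mul_one]
    have h1 : Ct⁻¹ * Ct⁻¹ = (Q * Q)ᵀ * (Q * Q) := by
      rw [hCtinv, transpose_mul, hQsym]
    have h2 : (Q * Q) *ᵥ ct = (Q * S) *ᵥ (c - b) := by
      rw [← mulVec_mulVec, hQct, mulVec_mulVec]
    rw [h1, my_dot_sq, h2, ← my_dot_sq, hQS]
    have : c - b = -(b - c) := by ring
    rw [this, mulVec_neg, dotProduct_neg, neg_dotProduct, neg_neg]
  -- determinant of M₁ is negative
  haveI : Invertible Ct := Ct.invertibleOfIsUnitDet hCtu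
  have hW : (Ct * Ct).det = Ct.det * Ct.det := det_mul _ _
  have hWu : IsUnit (Ct * Ct).det := by rw [hW]; exact hCtu.mul hCtu
  have hWpos : 0 < (Ct * Ct).det := by rw [hW]; exact mul_pos hCtdet hCtdet
  have hdet1 : M₁.det = (Ct * Ct - vecMulVec ct ct).det := by
    rw [hM₁, det_fromBlocks₁₁]
    have hinvOf : (⅟Ct : Matrix (Fin n) (Fin n) ℝ) = Ct⁻¹ := invOf_eq_nonsing_inv Ct
    rw [hinvOf]
    have : Ct - -vecMulVec ct ct * Ct⁻¹ * (-1) = Ct - vecMulVec ct ct * Ct⁻¹ := by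
      noncomm_ring
    rw [this, mul_comm, ← det_mul]
    congr 1
    rw [Matrix.sub_mul, Matrix.mul_assoc, nonsing_inv_mul _ hCtu, Matrix.mul_one]
  have hdet2 : (Ct * Ct - vecMulVec ct ct).det
      = (Ct * Ct).det * (1 - ct ⬝ᵥ ((Ct * Ct)⁻¹ *ᵥ ct)) := by
    have hfac : Ct * Ct - vecMulVec ct ct
        = (Ct * Ct) * (1 + replicateCol Unit (-((Ct * Ct)⁻¹ *ᵥ ct)) * replicateRow Unit ct) := by
      rw [Matrix.mul_add, Matrix.mul_one]
      congr 1
      rw [vecMulVec_eq Unit]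
      have : replicateCol Unit (-((Ct * Ct)⁻¹ *ᵥ ct)) = -((Ct * Ct)⁻¹ * replicateCol Unit ct) := by
        rw [← replicateCol_mulVec]
        ext i j
        simp
      rw [this]
      rw [Matrix.neg_mul, Matrix.mul_neg, ← Matrix.mul_assoc, ← Matrix.mul_assoc,
        mul_nonsing_inv _ hWu, Matrix.one_mul, sub_eq_add_neg]
    rw [hfac, det_mul, det_one_add_replicateCol_mul_replicateRow, dotProduct_neg, ← sub_eq_add_neg]
  have hr : 1 < ct ⬝ᵥ ((Ct * Ct)⁻¹ *ᵥ ct) := by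
    rw [Matrix.mul_inv_rev, hkey]; exact houtside
  have hdetM : M₁.det < 0 := by
    rw [hdet1, hdet2]
    have : 1 - ct ⬝ᵥ ((Ct * Ct)⁻¹ *ᵥ ct) < 0 := by linarith
    exact mul_neg_of_pos_of_neg hWpos this
  -- n is positive
  have hn : 0 < n := by
    rcases Nat.eq_zero_or_pos n with h | h
    · exfalso
      subst h
      simp [dotProduct] at houtside
      linarith
    · exact h
  haveI : Nontrivial (Fin n ⊕ Fin n) :=
    ⟨Sum.inl ⟨0, hn⟩, Sum.inr ⟨0, hn⟩, by simp⟩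
  -- characteristic polynomial
  set P : Polynomial ℝ := M₁.charpoly with hP
  have hcard : Fintype.card (Fin n ⊕ Fin n) = n + n := by
    simp [Fintype.card_sum]
  have hPdeg : P.natDegree = n + n := by
    rw [hP, Matrix.charpoly_natDegree_eq_dim, hcard]
  have hPmonic : P.Monic := M₁.charpoly_monic
  have hP0 : P.eval 0 < 0 := by
    rw [my_eval_charpoly, map_zero, zero_sub, det_neg, hcard]
    have : (-1 : ℝ) ^ (n + n) = 1 := Even.neg_one_pow ⟨n, rfl⟩
    rw [this]
    simpa using hdetM
  -- the reflected polynomial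
  set q : Polynomial ℝ := P.comp (-X) with hq
  have hqeval : ∀ x : ℝ, q.eval x = P.eval (-x) := by
    intro x; rw [hq, eval_comp, eval_neg, eval_X]
  have hPne : P ≠ 0 := hPmonic.ne_zero
  have hqdeg : q.natDegree = n + n := by
    rw [hq, natDegree_comp, hPdeg, natDegree_neg, natDegree_X, mul_one]
  have hqlc : q.leadingCoeff = 1 := by
    rw [hq, leadingCoeff_comp (by rw [natDegree_neg, natDegree_X]; norm_num),
      hPmonic.leadingCoeff, one_mul, leadingCoeff_neg, leadingCoeff_X, hPdeg]
    exact Even.neg_one_pow ⟨n, rfl⟩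
  have hqdegpos : 0 < q.degree := by
    rw [← natDegree_pos_iff_degree_pos, hqdeg]
    omega
  have htend : Tendsto (fun x => q.eval x) atTop atTop :=
    q.tendsto_atTop_of_leadingCoeff_nonneg hqdegpos (by rw [hqlc]; norm_num)
  obtain ⟨x₀, hx₀⟩ := ((htend.eventually_ge_atTop 0).and (eventually_ge_atTop (0 : ℝ))).exists
  obtain ⟨hx₀0, hx₀nonneg⟩ := hx₀
  have hq0 : q.eval 0 < 0 := by rw [hqeval, neg_zero]; exact hP0
  -- IVT
  have hivt : (0 : ℝ) ∈ Set.Icc (q.eval 0) (q.eval x₀) := ⟨hq0.le, hx₀0⟩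
  obtain ⟨x, hxmem, hxeval⟩ :=
    intermediate_value_Icc hx₀nonneg (q.continuousOn (s := Set.Icc 0 x₀)) hivt
  have hxeval' : q.eval x = 0 := hxeval
  have hxpos : 0 < x := by
    rcases lt_or_eq_of_le hxmem.1 with h | h
    · exact h
    · exfalso; rw [← h] at hxeval'; rw [hxeval'] at hq0; exact lt_irrefl _ hq0
  have hroot : ((Matrix.scalar (Fin n ⊕ Fin n) (-x)) - M₁).det = 0 := by
    rw [← my_eval_charpoly, ← hP, ← hqeval]; exact hxeval'
  -- conclude on spectrum
  refine ⟨Complex.ofReal (-x), ?_, by simpa using hxpos⟩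
  rw [spectrum.mem_iff]
  intro hu
  have hmapeq : algebraMap ℂ (Matrix (Fin n ⊕ Fin n) (Fin n ⊕ Fin n) ℂ) (Complex.ofReal (-x))
      - M₁.map Complex.ofReal
      = ((Matrix.scalar (Fin n ⊕ Fin n) (-x)) - M₁).map Complex.ofReal := by
    ext i j
    by_cases h : i = j <;>
      simp [Matrix.algebraMap_matrix_apply, Matrix.scalar_apply, h, Matrix.diagonal_apply]
  rw [hmapeq] at hu
  have hdetu : IsUnit ((((Matrix.scalar (Fin n ⊕ Fin n) (-x)) - M₁).map Complex.ofReal).det) :=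
    hu.map (Matrix.detMonoidHom (n := Fin n ⊕ Fin n) (R := ℂ))
  have heq : ((((Matrix.scalar (Fin n ⊕ Fin n) (-x)) - M₁)).map Complex.ofReal).det
      = Complex.ofReal (((Matrix.scalar (Fin n ⊕ Fin n) (-x)) - M₁).det) :=
    (RingHom.map_det Complex.ofRealHom _).symm
  rw [heq, hroot, Complex.ofReal_zero] at hdetu
  exact not_isUnit_zero hdetu
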